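/- Let H and K be two distinct nontrivial subgroups of a discrete group G. Then in the group von Neumann algebra L(G) with its canonical trace τ, the Mashood-Taylor distance satisfies d_MT(ℂ[H], ℂ[K]) = 1, and consequently d_MT(L(H), L(K)) = 1. -/

import Mathlib

/-- The Mashood-Taylor distance between two sets of operators: the Hausdorff distance,
in `L²`-norm (computed via the trace vector `ξ`), between the images of their
operator-norm closed unit balls. -/
noncomputable def dMT {𝓗 : Type*} [NormedAddCommGroup 𝓗] [InnerProductSpace ℂ 𝓗]
    (ξ : 𝓗) (P Q : Set (𝓗 →L[ℂ] 𝓗)) : ℝ :=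
  Metric.hausdorffDist
    ((fun x : 𝓗 →L[ℂ] 𝓗 => x ξ) '' (P ∩ Metric.closedBall 0 1))
    ((fun x : 𝓗 →L[ℂ] 𝓗 => x ξ) '' (Q ∩ Metric.closedBall 0 1))

section Aux

variable {G 𝓗 : Type*} [Group G] [DecidableEq G]
    [NormedAddCommGroup 𝓗] [InnerProductSpace ℂ 𝓗] [CompleteSpace 𝓗]

local notation "⟪" x ", " y "⟫" => @inner ℂ _ _ x y

/-- If a subspace is invariant under an operator and its adjoint, the orthogonal
projection onto it commutes with the operator. -/
lemma projComm (E : Submodule ℂ 𝓗) [E.HasOrthogonalProjection]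
    (A : 𝓗 →L[ℂ] 𝓗) (hA : ∀ v ∈ E, A v ∈ E)
    (hA' : ∀ v ∈ E, ContinuousLinearMap.adjoint A v ∈ E) (v : 𝓗) :
    (Submodule.orthogonalProjectionOnto E (A v) : 𝓗) = A (Submodule.orthogonalProjectionOnto E v) := by
  refine Submodule.eq_starProjection_of_mem_of_inner_eq_zero
    (hA _ (Submodule.orthogonalProjectionOnto E v).2) (fun w hw => ?_)
  have h1 : A v - A (Submodule.orthogonalProjectionOnto E v) = A (v - Submodule.orthogonalProjectionOnto E v) := by
    rw [map_sub]
  rw [h1, ← ContinuousLinearMap.adjoint_inner_right]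
  exact Submodule.starProjection_inner_eq_zero v _ (hA' w hw)

omit [CompleteSpace 𝓗] in
lemma dMT_symm (ξ : 𝓗) (P Q : Set (𝓗 →L[ℂ] 𝓗)) : dMT ξ P Q = dMT ξ Q P :=
  Metric.hausdorffDist_comm

lemma dMT_eq_one
    (lam : G → (𝓗 →L[ℂ] 𝓗)) (ξ : 𝓗)
    (hlam_mul : ∀ g h : G, lam (g * h) = lam g * lam h)
    (hlam_one : lam 1 = 1)
    (hlam_adj : ∀ g : G, ContinuousLinearMap.adjoint (lam g) = lam g⁻¹)
    (hlam_norm : ∀ g : G, ‖lam g‖ = 1)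
    (horth : ∀ g h : G, (inner ℂ (lam g ξ) (lam h ξ) : ℂ) = if g = h then 1 else 0)
    (K : Subgroup G) (h : G) (hhK : h ∉ K)
    (A B : Set (𝓗 →L[ℂ] 𝓗)) (h0A : (0 : 𝓗 →L[ℂ] 𝓗) ∈ A) (h0B : (0 : 𝓗 →L[ℂ] 𝓗) ∈ B)
    (hhA : lam h ∈ A)
    (hB : B ⊆ Set.centralizer (Set.centralizer
      (↑(Algebra.adjoin ℂ (lam '' (K : Set G))) : Set (𝓗 →L[ℂ] 𝓗)))) :
    dMT ξ A B = 1 := by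
  -- basic norms
  have hξ2 : (inner ℂ ξ ξ : ℂ) = 1 := by
    have := horth 1 1
    simpa [hlam_one] using this
  have hξnorm : ‖ξ‖ = 1 := by
    have h3 : ‖ξ‖ ^ 2 = 1 := by
      rw [← @inner_self_eq_norm_sq ℂ, hξ2]; simp
    nlinarith [norm_nonneg ξ]
  have hhnorm : ‖lam h ξ‖ = 1 := by
    have h2 : (inner ℂ (lam h ξ) (lam h ξ) : ℂ) = 1 := by rw [horth, if_pos rfl]
    have h3 : ‖lam h ξ‖ ^ 2 = 1 := by
      rw [← @inner_self_eq_norm_sq ℂ, h2]; simp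
    nlinarith [norm_nonneg (lam h ξ)]
  -- the subspace spanned by the K-orbit of ξ
  set S : Set 𝓗 := (fun g => lam g ξ) '' (K : Set G) with hS
  set E : Submodule ℂ 𝓗 := (Submodule.span ℂ S).topologicalClosure with hE
  haveI : CompleteSpace E :=
    (Submodule.isClosed_topologicalClosure _).completeSpace_coe
  -- invariance of E
  have hinv : ∀ k : G, k ∈ K → ∀ v ∈ E, lam k v ∈ E := by
    intro k hk v hv
    have hcl : IsClosed ((lam k) ⁻¹' (E : Set 𝓗)) :=
      (Submodule.isClosed_topologicalClosure _).preimage (lam k).continuous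
    have hsub : Submodule.span ℂ S ≤ Submodule.comap (lam k : 𝓗 →ₗ[ℂ] 𝓗) E := by
      rw [Submodule.span_le]
      rintro _ ⟨g, hg, rfl⟩
      rw [SetLike.mem_coe, Submodule.mem_comap]
      have h1 : (lam k : 𝓗 →ₗ[ℂ] 𝓗) ((fun g => lam g ξ) g) = lam (k * g) ξ := by
        show lam k (lam g ξ) = lam (k * g) ξ
        rw [hlam_mul]; rfl
      rw [h1]
      exact Submodule.le_topologicalClosure _
        (Submodule.subset_span ⟨k * g, K.mul_mem hk hg, rfl⟩)
    have hcl' : IsClosed ((Submodule.comap (lam k : 𝓗 →ₗ[ℂ] 𝓗) E : Submodule ℂ 𝓗) : Set 𝓗) := hcl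
    have hcomap : E ≤ Submodule.comap (lam k : 𝓗 →ₗ[ℂ] 𝓗) E :=
      Submodule.topologicalClosure_minimal _ hsub hcl'
    exact hcomap hv
  -- the orthogonal projection onto E
  set P : 𝓗 →L[ℂ] 𝓗 := E.subtypeL.comp (Submodule.orthogonalProjectionOnto E) with hP
  have hPapp : ∀ v, P v = (Submodule.orthogonalProjectionOnto E v : 𝓗) := fun v => rfl
  have hPcomm : ∀ k : G, k ∈ K → lam k * P = P * lam k := by
    intro k hk
    ext v
    have := projComm E (lam k) (hinv k hk) (fun w hw => by
      rw [hlam_adj]; exact hinv k⁻¹ (K.inv_mem hk) w hw) v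
    simpa [ContinuousLinearMap.mul_apply, hPapp] using this.symm
  -- P lies in the centralizer of ℂ[K]
  have hPc : P ∈ Set.centralizer
      (↑(Algebra.adjoin ℂ (lam '' (K : Set G))) : Set (𝓗 →L[ℂ] 𝓗)) := by
    rw [Set.mem_centralizer_iff]
    intro y hy
    induction hy using Algebra.adjoin_induction with
    | mem x hx =>
        obtain ⟨k, hk, rfl⟩ := hx
        exact hPcomm k hk
    | algebraMap r => exact (Algebra.commutes r P).symm ▸ Algebra.commutes r P
    | add x y hx hy ihx ihy => rw [add_mul, mul_add, ihx, ihy]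
    | mul x y hx hy ihx ihy => rw [mul_assoc, ihy, ← mul_assoc, ihx, mul_assoc]
  -- ξ belongs to E
  have hξE : ξ ∈ E := by
    refine Submodule.le_topologicalClosure _ (Submodule.subset_span ?_)
    exact ⟨1, K.one_mem, by show lam (1:G) ξ = ξ; rw [hlam_one]; rfl⟩
  -- elements of B map ξ into E
  have hBmapsE : ∀ x ∈ B, x ξ ∈ E := by
    intro x hx
    have hcomm : P * x = x * P := (hB hx) P hPc
    have h1 : P ξ = ξ := by
      rw [hPapp]
      exact Submodule.starProjection_eq_self_iff.mpr hξE
    have h2 : x ξ = P (x ξ) := by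
      conv_lhs => rw [← h1]
      have := congrArg (fun T : 𝓗 →L[ℂ] 𝓗 => T ξ) hcomm
      simpa [ContinuousLinearMap.mul_apply] using this.symm
    rw [h2, hPapp]
    exact (Submodule.orthogonalProjectionOnto E (x ξ)).2
  -- lam h ξ is orthogonal to E
  have hperp : ∀ w ∈ E, ⟪lam h ξ, w⟫ = 0 := by
    have hspan : ∀ w ∈ Submodule.span ℂ S, ⟪lam h ξ, w⟫ = 0 := by
      intro w hw
      induction hw using Submodule.span_induction with
      | mem x hx =>
          obtain ⟨k, hk, rfl⟩ := hx
          rw [horth, if_neg]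
          intro hkh; exact hhK (hkh ▸ hk)
      | zero => exact inner_zero_right _
      | add x y hx hy ihx ihy => rw [inner_add_right, ihx, ihy, add_zero]
      | smul c x hx ihx => rw [inner_smul_right, ihx, mul_zero]
    intro w hw
    have hwcl : w ∈ closure ((Submodule.span ℂ S : Submodule ℂ 𝓗) : Set 𝓗) := hw
    have hcl : IsClosed {v : 𝓗 | ⟪lam h ξ, v⟫ = 0} :=
      isClosed_eq (Continuous.inner continuous_const continuous_id) continuous_const
    exact hcl.closure_subset_iff.mpr hspan hwcl
  -- now compute the Hausdorff distance
  rw [dMT]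
  set s : Set 𝓗 := (fun x : 𝓗 →L[ℂ] 𝓗 => x ξ) '' (A ∩ Metric.closedBall 0 1) with hs
  set t : Set 𝓗 := (fun x : 𝓗 →L[ℂ] 𝓗 => x ξ) '' (B ∩ Metric.closedBall 0 1) with ht
  have h0s : (0 : 𝓗) ∈ s := ⟨0, ⟨h0A, Metric.mem_closedBall_self zero_le_one⟩, by simp⟩
  have h0t : (0 : 𝓗) ∈ t := ⟨0, ⟨h0B, Metric.mem_closedBall_self zero_le_one⟩, by simp⟩
  have hnorm_le : ∀ (x : 𝓗 →L[ℂ] 𝓗), x ∈ Metric.closedBall (0 : 𝓗 →L[ℂ] 𝓗) 1 →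
      ‖x ξ‖ ≤ 1 := by
    intro x hx
    rw [Metric.mem_closedBall, dist_zero_right] at hx
    calc ‖x ξ‖ ≤ ‖x‖ * ‖ξ‖ := x.le_opNorm ξ
      _ ≤ 1 := by rw [hξnorm, mul_one]; exact hx
  have hsball : s ⊆ Metric.closedBall (0 : 𝓗) 1 := by
    rintro _ ⟨x, ⟨_, hx1⟩, rfl⟩
    rw [Metric.mem_closedBall, dist_zero_right]
    exact hnorm_le x hx1
  have htball : t ⊆ Metric.closedBall (0 : 𝓗) 1 := by
    rintro _ ⟨x, ⟨_, hx1⟩, rfl⟩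
    rw [Metric.mem_closedBall, dist_zero_right]
    exact hnorm_le x hx1
  have hfin : EMetric.hausdorffEdist s t ≠ ⊤ :=
    Metric.hausdorffEdist_ne_top_of_nonempty_of_bounded ⟨0, h0s⟩ ⟨0, h0t⟩
      (Metric.isBounded_closedBall.subset hsball)
      (Metric.isBounded_closedBall.subset htball)
  have hle : Metric.hausdorffDist s t ≤ 1 := by
    refine Metric.hausdorffDist_le_of_mem_dist zero_le_one ?_ ?_
    · rintro _ ⟨x, ⟨_, hx1⟩, rfl⟩
      exact ⟨0, h0t, by rw [dist_zero_right]; exact hnorm_le x hx1⟩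
    · rintro _ ⟨x, ⟨_, hx1⟩, rfl⟩
      exact ⟨0, h0s, by rw [dist_zero_right]; exact hnorm_le x hx1⟩
  have hmem_s : lam h ξ ∈ s := by
    refine ⟨lam h, ⟨hhA, ?_⟩, rfl⟩
    rw [Metric.mem_closedBall, dist_zero_right, hlam_norm]
  have hdist_ge : ∀ y ∈ t, (1 : ℝ) ≤ dist (lam h ξ) y := by
    rintro _ ⟨x, ⟨hxB, _⟩, rfl⟩
    have hxiE : x ξ ∈ E := hBmapsE x hxB
    have hip : ⟪lam h ξ, lam h ξ - x ξ⟫ = 1 := by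
      rw [inner_sub_right, hperp _ hxiE, sub_zero]
      have := horth h h
      rwa [if_pos rfl] at this
    have hcs : ‖⟪lam h ξ, lam h ξ - x ξ⟫‖ ≤ ‖lam h ξ‖ * ‖lam h ξ - x ξ‖ :=
      norm_inner_le_norm _ _
    rw [hip, hhnorm, one_mul] at hcs
    rw [dist_eq_norm]
    simpa using hcs
  have hge : (1 : ℝ) ≤ Metric.hausdorffDist s t := by
    have h1 : (1 : ℝ) ≤ Metric.infDist (lam h ξ) t := by
      by_contra hlt
      push_neg at hlt
      obtain ⟨y, hyt, hy⟩ := (Metric.infDist_lt_iff ⟨0, h0t⟩).mp hlt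
      exact absurd (hdist_ge y hyt) (not_le.mpr hy)
    exact h1.trans (Metric.infDist_le_hausdorffDist_of_mem hmem_s hfin)
  linarith

end Aux

theorem stmt18 {G 𝓗 : Type*} [Group G] [DecidableEq G]
    [NormedAddCommGroup 𝓗] [InnerProductSpace ℂ 𝓗] [CompleteSpace 𝓗]
    (lam : G → (𝓗 →L[ℂ] 𝓗)) (ξ : 𝓗)
    (hlam_mul : ∀ g h : G, lam (g * h) = lam g * lam h)
    (hlam_one : lam 1 = 1)
    (hlam_adj : ∀ g : G, ContinuousLinearMap.adjoint (lam g) = lam g⁻¹)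
    (hlam_norm : ∀ g : G, ‖lam g‖ = 1)
    -- orthonormality of the vectors `λ_g ξ` (so `ξ` plays the role of `δ_e`
    -- and `x ↦ ⟪x ξ, ξ⟫` is the canonical trace)
    (horth : ∀ g h : G, (inner ℂ (lam g ξ) (lam h ξ) : ℂ) = if g = h then 1 else 0)
    (H K : Subgroup G) (hHK : H ≠ K) (hH : H ≠ ⊥) (hK : K ≠ ⊥) :
    dMT ξ (↑(Algebra.adjoin ℂ (lam '' (H : Set G))) : Set (𝓗 →L[ℂ] 𝓗))
        (↑(Algebra.adjoin ℂ (lam '' (K : Set G))) : Set (𝓗 →L[ℂ] 𝓗)) = 1 ∧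
    dMT ξ
        (Set.centralizer (Set.centralizer
          (↑(Algebra.adjoin ℂ (lam '' (H : Set G))) : Set (𝓗 →L[ℂ] 𝓗))))
        (Set.centralizer (Set.centralizer
          (↑(Algebra.adjoin ℂ (lam '' (K : Set G))) : Set (𝓗 →L[ℂ] 𝓗)))) = 1 := by
  -- get an element of one subgroup not in the other
  have hex : (∃ h ∈ H, h ∉ K) ∨ (∃ k ∈ K, k ∉ H) := by
    by_contra hc
    push_neg at hc
    exact hHK (le_antisymm (fun x hx => hc.1 x hx) (fun x hx => hc.2 x hx))
  -- abbreviations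
  set AH := (↑(Algebra.adjoin ℂ (lam '' (H : Set G))) : Set (𝓗 →L[ℂ] 𝓗)) with hAH
  set AK := (↑(Algebra.adjoin ℂ (lam '' (K : Set G))) : Set (𝓗 →L[ℂ] 𝓗)) with hAK
  have h0H : (0 : 𝓗 →L[ℂ] 𝓗) ∈ AH := (Algebra.adjoin ℂ _).zero_mem
  have h0K : (0 : 𝓗 →L[ℂ] 𝓗) ∈ AK := (Algebra.adjoin ℂ _).zero_mem
  have hmemH : ∀ g ∈ H, lam g ∈ AH := fun g hg =>
    Algebra.subset_adjoin ⟨g, hg, rfl⟩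
  have hmemK : ∀ g ∈ K, lam g ∈ AK := fun g hg =>
    Algebra.subset_adjoin ⟨g, hg, rfl⟩
  rcases hex with ⟨h, hhH, hhK⟩ | ⟨k, hkK, hkH⟩
  · constructor
    · exact dMT_eq_one lam ξ hlam_mul hlam_one hlam_adj hlam_norm horth K h hhK
        AH AK h0H h0K (hmemH h hhH) Set.subset_centralizer_centralizer
    · exact dMT_eq_one lam ξ hlam_mul hlam_one hlam_adj hlam_norm horth K h hhK
        (Set.centralizer (Set.centralizer AH)) (Set.centralizer (Set.centralizer AK))
        (Set.subset_centralizer_centralizer h0H)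
        (Set.subset_centralizer_centralizer h0K)
        (Set.subset_centralizer_centralizer (hmemH h hhH))
        (fun _ hx => hx)
  · constructor
    · rw [dMT_symm]
      exact dMT_eq_one lam ξ hlam_mul hlam_one hlam_adj hlam_norm horth H k hkH
        AK AH h0K h0H (hmemK k hkK) Set.subset_centralizer_centralizer
    · rw [dMT_symm]
      exact dMT_eq_one lam ξ hlam_mul hlam_one hlam_adj hlam_norm horth H k hkH
        (Set.centralizer (Set.centralizer AK)) (Set.centralizer (Set.centralizer AH))
        (Set.subset_centralizer_centralizer h0K)
        (Set.subset_centralizer_centralizer h0H)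
        (Set.subset_centralizer_centralizer (hmemK k hkK))
        (fun _ hx => hx)
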